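/- Let $A, B$ be unital differential graded algebras over rings of characteristic 2, and let $\mathcal{M}_k$ ($k \in \mathbb{Z}/3$) be type DD structures over $(A, B)$ with morphisms $f_k : \mathcal{M}_k \to \mathcal{M}_{k+1}$, $\phi_k : \mathcal{M}_k \to \mathcal{M}_{k+2}$, $\psi_k : \mathcal{M}_k \to \mathcal{M}_k$ satisfying $\partial f_k = 0$, $f_{k+1} \circ f_k + \partial \phi_k = 0$, and $f_{k+2} \circ \phi_k + \phi_{k+1} \circ f_k + \partial \psi_k = \mathrm{Id}_k$. Then the maps $G_k : \mathcal{M}_k \to \mathrm{Cone}(f_{k+1})$ defined by $G_k(m) = (f_k(m), \phi_k(m))$ and $G_k' : \mathrm{Cone}(f_{k+1}) \to \mathcal{M}_k$ defined by $G_k'(m_{k+1}, m_{k+2}) = \phi_{k+1}(m_{k+1}) + f_{k+2}(m_{k+2})$ are type DD homomorphisms, and $G_k' \circ G_k$ is homotopic to $\mathrm{Id}_k$ via the homotopy $\psi_k$. -/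
import Mathlib


open TensorProduct

section DD

variable (k : Type*) [CommRing k]
variable (A B : Type*) [Ring A] [Ring B] [Algebra k A] [Algebra k B]

/-- `Box X = A ⊗ X ⊗ B`, the target of structure maps and morphisms of
type DD structures over `(A, B)`. -/
abbrev Box (X : Type*) [AddCommGroup X] [Module k X] : Type _ :=
  A ⊗[k] (X ⊗[k] B)

variable {X Y Z : Type*} [AddCommGroup X] [Module k X] [AddCommGroup Y] [Module k Y]
  [AddCommGroup Z] [Module k Z]

/-- Left multiplication by `A` on the outer `A`-factor of `A ⊗ X ⊗ B`. -/
noncomputable def actA (X : Type*) [AddCommGroup X] [Module k X] :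
    A →ₗ[k] Box k A B X →ₗ[k] Box k A B X :=
  (LinearMap.rTensorHom (X ⊗[k] B)).comp (LinearMap.mul k A)

/-- Right multiplication by `B` on the outer `B`-factor of `A ⊗ X ⊗ B`. -/
noncomputable def actB (X : Type*) [AddCommGroup X] [Module k X] :
    B →ₗ[k] Box k A B X →ₗ[k] Box k A B X :=
  (LinearMap.lTensorHom A).comp ((LinearMap.lTensorHom X).comp ((LinearMap.mul k B).flip))

/-- The collapse map `A ⊗ (A ⊗ X ⊗ B) ⊗ B → A ⊗ X ⊗ B`,
`a ⊗ (a' ⊗ x ⊗ b') ⊗ b ↦ (a * a') ⊗ x ⊗ (b' * b)`, used to compose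
type DD morphisms (multiplying the outer algebra factors). -/
noncomputable def collapse (X : Type*) [AddCommGroup X] [Module k X] :
    A ⊗[k] ((Box k A B X) ⊗[k] B) →ₗ[k] Box k A B X :=
  TensorProduct.lift
    (((LinearMap.llcomp k ((Box k A B X) ⊗[k] B) (Box k A B X) (Box k A B X)).flip
        (TensorProduct.lift ((actB k A B X).flip))).comp (actA k A B X))

/-- The functorial map `A ⊗ X ⊗ B → A ⊗ Y ⊗ B` induced by `φ : X → Y`. -/
noncomputable def boxMap (φ : X →ₗ[k] Y) : Box k A B X →ₗ[k] Box k A B Y :=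
  TensorProduct.map LinearMap.id (TensorProduct.map φ LinearMap.id)

/-- Extension of a type DD morphism `g : Y → A ⊗ Z ⊗ B` to a map
`A ⊗ Y ⊗ B → A ⊗ Z ⊗ B`, multiplying the outer algebra factors. -/
noncomputable def ddExt (g : Y →ₗ[k] Box k A B Z) :
    Box k A B Y →ₗ[k] Box k A B Z :=
  (collapse k A B Z).comp
    (TensorProduct.map LinearMap.id (TensorProduct.map g LinearMap.id))

/-- Composition of type DD morphisms. -/
noncomputable def ddComp (g : Y →ₗ[k] Box k A B Z) (f : X →ₗ[k] Box k A B Y) :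
    X →ₗ[k] Box k A B Z :=
  (ddExt k A B g).comp f

/-- The differential `d_A ⊗ id ⊗ id + id ⊗ id ⊗ d_B` on `A ⊗ X ⊗ B`. -/
noncomputable def boxD (dA : A →ₗ[k] A) (dB : B →ₗ[k] B) (X : Type*)
    [AddCommGroup X] [Module k X] : Box k A B X →ₗ[k] Box k A B X :=
  TensorProduct.map dA LinearMap.id +
    TensorProduct.map LinearMap.id (TensorProduct.map LinearMap.id dB)

/-- The type DD structure compatibility condition for `δ¹ : X → A ⊗ X ⊗ B`:
`(d_A ⊗ id ⊗ id + id ⊗ id ⊗ d_B) ∘ δ¹ + (μ_A ⊗ id ⊗ μ_B) ∘ (id ⊗ δ¹ ⊗ id) ∘ δ¹ = 0`. -/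
def IsDDStructure (dA : A →ₗ[k] A) (dB : B →ₗ[k] B)
    (δ : X →ₗ[k] Box k A B X) : Prop :=
  (boxD k A B dA dB X).comp δ + (ddExt k A B δ).comp δ = 0

/-- The boundary `∂f` of a type DD morphism `f : X → A ⊗ Y ⊗ B`. -/
noncomputable def ddBdry (dA : A →ₗ[k] A) (dB : B →ₗ[k] B)
    (δX : X →ₗ[k] Box k A B X) (δY : Y →ₗ[k] Box k A B Y)
    (f : X →ₗ[k] Box k A B Y) : X →ₗ[k] Box k A B Y :=
  (ddExt k A B δY).comp f + (ddExt k A B f).comp δX + (boxD k A B dA dB Y).comp f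

/-- The identity type DD morphism `x ↦ 1 ⊗ x ⊗ 1`. -/
noncomputable def ddId (X : Type*) [AddCommGroup X] [Module k X] :
    X →ₗ[k] Box k A B X :=
  (TensorProduct.mk k A (X ⊗[k] B) 1).comp ((TensorProduct.mk k X B).flip 1)


/-- The structure map of the mapping cone of a type DD morphism
`f : M → A ⊗ N ⊗ B`: on `M ⊕ N`, `δ_f(m, n) = (δ_M m, f m + δ_N n)`. -/
noncomputable def coneδ {M N : Type*} [AddCommGroup M] [Module k M]
    [AddCommGroup N] [Module k N]
    (δM : M →ₗ[k] Box k A B M) (δN : N →ₗ[k] Box k A B N)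
    (f : M →ₗ[k] Box k A B N) : M × N →ₗ[k] Box k A B (M × N) :=
  (boxMap k A B (LinearMap.inl k M N)).comp (δM.comp (LinearMap.fst k M N)) +
    (boxMap k A B (LinearMap.inr k M N)).comp (f.comp (LinearMap.fst k M N)) +
    (boxMap k A B (LinearMap.inr k M N)).comp (δN.comp (LinearMap.snd k M N))

/-- The morphism `G_k : M_k → Cone(f_{k+1})`, `G_k(m) = (f_k(m), φ_k(m))`. -/
noncomputable def Gmor {X Y Z : Type*} [AddCommGroup X] [Module k X]
    [AddCommGroup Y] [Module k Y] [AddCommGroup Z] [Module k Z]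
    (f : X →ₗ[k] Box k A B Y) (φ : X →ₗ[k] Box k A B Z) :
    X →ₗ[k] Box k A B (Y × Z) :=
  (boxMap k A B (LinearMap.inl k Y Z)).comp f +
    (boxMap k A B (LinearMap.inr k Y Z)).comp φ

/-- The morphism `G'_k : Cone(f_{k+1}) → M_k`,
`G'_k(m_{k+1}, m_{k+2}) = φ_{k+1}(m_{k+1}) + f_{k+2}(m_{k+2})`. -/
noncomputable def G'mor {X Y Z : Type*} [AddCommGroup X] [Module k X]
    [AddCommGroup Y] [Module k Y] [AddCommGroup Z] [Module k Z]
    (φ' : Y →ₗ[k] Box k A B X) (f'' : Z →ₗ[k] Box k A B X) :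
    Y × Z →ₗ[k] Box k A B X :=
  φ'.comp (LinearMap.fst k Y Z) + f''.comp (LinearMap.snd k Y Z)


section Aux

variable {W : Type*} [AddCommGroup W] [Module k W]

lemma collapse_tmul (a a' : A) (x : X) (b b' : B) :
    collapse k A B X (a ⊗ₜ[k] ((a' ⊗ₜ[k] (x ⊗ₜ[k] b')) ⊗ₜ[k] b)) =
      (a * a') ⊗ₜ[k] (x ⊗ₜ[k] (b' * b)) := by
  simp [collapse, actA, actB, LinearMap.mul_apply']

lemma boxMap_tmul (φ : X →ₗ[k] Y) (a : A) (x : X) (b : B) :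
    boxMap k A B φ (a ⊗ₜ[k] (x ⊗ₜ[k] b)) = a ⊗ₜ[k] (φ x ⊗ₜ[k] b) := by
  simp [boxMap]

lemma ddExt_tmul (g : Y →ₗ[k] Box k A B Z) (a : A) (y : Y) (b : B) :
    ddExt k A B g (a ⊗ₜ[k] (y ⊗ₜ[k] b)) = collapse k A B Z (a ⊗ₜ[k] (g y ⊗ₜ[k] b)) := by
  simp [ddExt]

lemma ddExt_add (g g' : Y →ₗ[k] Box k A B Z) :
    ddExt k A B (g + g') = ddExt k A B g + ddExt k A B g' := by
  unfold ddExt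
  rw [TensorProduct.map_add_left, TensorProduct.map_add_right, LinearMap.comp_add]

lemma ddExt_comp_boxMap (g : Y →ₗ[k] Box k A B Z) (i : X →ₗ[k] Y) :
    (ddExt k A B g).comp (boxMap k A B i) = ddExt k A B (g.comp i) := by
  ext a x b
  simp [ddExt_tmul, boxMap_tmul]

lemma boxMap_comp_ddExt (g : Y →ₗ[k] Box k A B Z) (i : Z →ₗ[k] W) :
    ddExt k A B ((boxMap k A B i).comp g) = (boxMap k A B i).comp (ddExt k A B g) := by
  ext a y b
  simp only [TensorProduct.AlgebraTensorModule.curry_apply, TensorProduct.curry_apply,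
    LinearMap.restrictScalars_apply, LinearMap.comp_apply, ddExt_tmul]
  have key : ∀ m : Box k A B Z,
      collapse k A B W (a ⊗ₜ[k] ((boxMap k A B i m) ⊗ₜ[k] b)) =
        boxMap k A B i (collapse k A B Z (a ⊗ₜ[k] (m ⊗ₜ[k] b))) := by
    intro m
    induction m using TensorProduct.induction_on with
    | zero => simp [tmul_zero, zero_tmul]
    | tmul a' t =>
      induction t using TensorProduct.induction_on with
      | zero => simp [tmul_zero, zero_tmul]
      | tmul x b' => simp [collapse_tmul, boxMap_tmul]
      | add t1 t2 h1 h2 => simp_all [tmul_add, add_tmul]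
    | add m1 m2 h1 h2 => simp_all [tmul_add, add_tmul]
  exact key (g y)

lemma ddExt_zero : ddExt k A B (0 : Y →ₗ[k] Box k A B Z) = 0 := by
  ext a y b
  simp [ddExt_tmul, zero_tmul, tmul_zero]

lemma boxD_comp_boxMap (dA : A →ₗ[k] A) (dB : B →ₗ[k] B) (i : X →ₗ[k] Y) :
    (boxD k A B dA dB Y).comp (boxMap k A B i) =
      (boxMap k A B i).comp (boxD k A B dA dB X) := by
  ext a x b
  simp [boxD, boxMap_tmul, tmul_add, add_tmul]

end Aux

section Aux2

variable {W : Type*} [AddCommMonoid W] [Module k W]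

lemma comp_fst_comp_inl (g : Y →ₗ[k] W) :
    (g.comp (LinearMap.fst k Y Z)).comp (LinearMap.inl k Y Z) = g := by
  rw [LinearMap.comp_assoc, LinearMap.fst_comp_inl, LinearMap.comp_id]

lemma comp_snd_comp_inl (g : Z →ₗ[k] W) :
    (g.comp (LinearMap.snd k Y Z)).comp (LinearMap.inl k Y Z) = 0 := by
  rw [LinearMap.comp_assoc, LinearMap.snd_comp_inl, LinearMap.comp_zero]

lemma comp_fst_comp_inr (g : Y →ₗ[k] W) :
    (g.comp (LinearMap.fst k Y Z)).comp (LinearMap.inr k Y Z) = 0 := by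
  rw [LinearMap.comp_assoc, LinearMap.fst_comp_inr, LinearMap.comp_zero]

lemma comp_snd_comp_inr (g : Z →ₗ[k] W) :
    (g.comp (LinearMap.snd k Y Z)).comp (LinearMap.inr k Y Z) = g := by
  rw [LinearMap.comp_assoc, LinearMap.snd_comp_inr, LinearMap.comp_id]

variable (dA : A →ₗ[k] A) (dB : B →ₗ[k] B)
variable (δX : X →ₗ[k] Box k A B X) (δY : Y →ₗ[k] Box k A B Y) (δZ : Z →ₗ[k] Box k A B Z)

lemma G_hom (f : X →ₗ[k] Box k A B Y) (f' : Y →ₗ[k] Box k A B Z) (φ : X →ₗ[k] Box k A B Z)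
    (hf : ddBdry k A B dA dB δX δY f = 0)
    (hφ : ddComp k A B f' f + ddBdry k A B dA dB δX δZ φ = 0) :
    ddBdry k A B dA dB δX (coneδ k A B δY δZ f') (Gmor k A B f φ) = 0 := by
  have e : ddBdry k A B dA dB δX (coneδ k A B δY δZ f') (Gmor k A B f φ) =
      (boxMap k A B (LinearMap.inl k Y Z)).comp (ddBdry k A B dA dB δX δY f) +
        (boxMap k A B (LinearMap.inr k Y Z)).comp
          (ddComp k A B f' f + ddBdry k A B dA dB δX δZ φ) := by
    simp only [ddBdry, ddComp, Gmor, coneδ, LinearMap.add_comp, LinearMap.comp_add,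
      ← LinearMap.comp_assoc, ddExt_comp_boxMap, comp_fst_comp_inl, comp_snd_comp_inl,
      comp_fst_comp_inr, comp_snd_comp_inr, ddExt_add, ddExt_zero, boxMap_comp_ddExt, boxD_comp_boxMap,
      LinearMap.comp_zero, LinearMap.zero_comp, add_zero, zero_add]
    abel
  rw [e, hf, hφ, LinearMap.comp_zero, LinearMap.comp_zero, add_zero]

lemma G'_hom (f' : Y →ₗ[k] Box k A B Z) (φ' : Y →ₗ[k] Box k A B X)
    (f'' : Z →ₗ[k] Box k A B X)
    (hφ' : ddComp k A B f'' f' + ddBdry k A B dA dB δY δX φ' = 0)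
    (hf'' : ddBdry k A B dA dB δZ δX f'' = 0) :
    ddBdry k A B dA dB (coneδ k A B δY δZ f') δX (G'mor k A B φ' f'') = 0 := by
  have e : ddBdry k A B dA dB (coneδ k A B δY δZ f') δX (G'mor k A B φ' f'') =
      (ddComp k A B f'' f' + ddBdry k A B dA dB δY δX φ').comp (LinearMap.fst k Y Z) +
        (ddBdry k A B dA dB δZ δX f'').comp (LinearMap.snd k Y Z) := by
    simp only [ddBdry, ddComp, G'mor, coneδ, LinearMap.add_comp, LinearMap.comp_add,
      ← LinearMap.comp_assoc, ddExt_comp_boxMap, comp_fst_comp_inl, comp_snd_comp_inl,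
      comp_fst_comp_inr, comp_snd_comp_inr, ddExt_add, ddExt_zero, boxMap_comp_ddExt, boxD_comp_boxMap,
      LinearMap.comp_zero, LinearMap.zero_comp, add_zero, zero_add]
    abel
  rw [e, hφ', hf'', LinearMap.zero_comp, LinearMap.zero_comp, add_zero]

lemma comp_G'_G (f : X →ₗ[k] Box k A B Y) (φ : X →ₗ[k] Box k A B Z)
    (φ' : Y →ₗ[k] Box k A B X) (f'' : Z →ₗ[k] Box k A B X) :
    ddComp k A B (G'mor k A B φ' f'') (Gmor k A B f φ) =
      ddComp k A B f'' φ + ddComp k A B φ' f := by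
  simp only [ddBdry, ddComp, G'mor, Gmor, LinearMap.add_comp, LinearMap.comp_add,
    ← LinearMap.comp_assoc, ddExt_comp_boxMap, comp_fst_comp_inl, comp_snd_comp_inl,
    comp_fst_comp_inr, comp_snd_comp_inr, ddExt_add, ddExt_zero, boxMap_comp_ddExt,
    LinearMap.comp_zero, LinearMap.zero_comp, add_zero, zero_add]
  abel

lemma homotopy_gen [CharP k 2] (f : X →ₗ[k] Box k A B Y) (φ : X →ₗ[k] Box k A B Z)
    (φ' : Y →ₗ[k] Box k A B X) (f'' : Z →ₗ[k] Box k A B X)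
    (ψ : X →ₗ[k] Box k A B X)
    (hψ : ddComp k A B f'' φ + ddComp k A B φ' f + ddBdry k A B dA dB δX δX ψ =
      ddId k A B X) :
    ddBdry k A B dA dB δX δX ψ =
      ddComp k A B (G'mor k A B φ' f'') (Gmor k A B f φ) + ddId k A B X := by
  rw [comp_G'_G]
  set t := ddComp k A B f'' φ + ddComp k A B φ' f with ht
  have h2 : t + t = 0 := by
    have h20 : (2 : k) = 0 := by
      have := CharP.cast_eq_zero k 2
      exact_mod_cast this
    calc t + t = (2 : k) • t := by rw [two_smul]
    _ = 0 := by rw [h20, zero_smul]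
  have := congrArg (fun u => t + u) hψ
  simp only [← add_assoc, h2, zero_add] at this
  rw [this]

end Aux2
/-- **Lemma 2.1 for type DD structures: the comparison maps with the cone.**
Let `A, B` be unital DGAs over rings of characteristic `2`, and let
`ℳ₀, ℳ₁, ℳ₂` be type DD structures over `(A, B)`, cyclically indexed by
`ℤ/3` (identifying `∞` with `2`), with morphisms `f_k : ℳ_k → ℳ_{k+1}`,
`φ_k : ℳ_k → ℳ_{k+2}`, `ψ_k : ℳ_k → ℳ_k` satisfying `∂f_k = 0`,
`f_{k+1} ∘ f_k + ∂φ_k = 0` and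
`f_{k+2} ∘ φ_k + φ_{k+1} ∘ f_k + ∂ψ_k = Id_k`.  Then for each `k` the maps
`G_k(m) = (f_k m, φ_k m)` and `G'_k(m_{k+1}, m_{k+2}) = φ_{k+1} m_{k+1} +
f_{k+2} m_{k+2}` are type DD homomorphisms between `ℳ_k` and
`Cone(f_{k+1})`, and `G'_k ∘ G_k` is homotopic to `Id_k` via the homotopy
`ψ_k`, i.e. `∂ψ_k = G'_k ∘ G_k + Id_k`. -/
theorem cone_comparison_maps_are_homomorphisms_and_homotopy
    {k : Type*} [CommRing k] [CharP k 2]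
    {A B : Type*} [Ring A] [Ring B] [Algebra k A] [Algebra k B]
    (dA : A →ₗ[k] A) (dB : B →ₗ[k] B)
    (hdA2 : dA ∘ₗ dA = 0) (hdA1 : dA 1 = 0)
    (hdAmul : ∀ a a' : A, dA (a * a') = dA a * a' + a * dA a')
    (hdB2 : dB ∘ₗ dB = 0) (hdB1 : dB 1 = 0)
    (hdBmul : ∀ b b' : B, dB (b * b') = dB b * b' + b * dB b')
    {M₀ M₁ M₂ : Type*} [AddCommGroup M₀] [Module k M₀]
    [AddCommGroup M₁] [Module k M₁] [AddCommGroup M₂] [Module k M₂]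
    (δ₀ : M₀ →ₗ[k] Box k A B M₀) (δ₁ : M₁ →ₗ[k] Box k A B M₁)
    (δ₂ : M₂ →ₗ[k] Box k A B M₂)
    (h₀ : IsDDStructure k A B dA dB δ₀) (h₁ : IsDDStructure k A B dA dB δ₁)
    (h₂ : IsDDStructure k A B dA dB δ₂)
    (f₀ : M₀ →ₗ[k] Box k A B M₁) (f₁ : M₁ →ₗ[k] Box k A B M₂)
    (f₂ : M₂ →ₗ[k] Box k A B M₀)
    (φ₀ : M₀ →ₗ[k] Box k A B M₂) (φ₁ : M₁ →ₗ[k] Box k A B M₀)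
    (φ₂ : M₂ →ₗ[k] Box k A B M₁)
    (ψ₀ : M₀ →ₗ[k] Box k A B M₀) (ψ₁ : M₁ →ₗ[k] Box k A B M₁)
    (ψ₂ : M₂ →ₗ[k] Box k A B M₂)
    (hf₀ : ddBdry k A B dA dB δ₀ δ₁ f₀ = 0)
    (hf₁ : ddBdry k A B dA dB δ₁ δ₂ f₁ = 0)
    (hf₂ : ddBdry k A B dA dB δ₂ δ₀ f₂ = 0)
    (hφ₀ : ddComp k A B f₁ f₀ + ddBdry k A B dA dB δ₀ δ₂ φ₀ = 0)
    (hφ₁ : ddComp k A B f₂ f₁ + ddBdry k A B dA dB δ₁ δ₀ φ₁ = 0)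
    (hφ₂ : ddComp k A B f₀ f₂ + ddBdry k A B dA dB δ₂ δ₁ φ₂ = 0)
    (hψ₀ : ddComp k A B f₂ φ₀ + ddComp k A B φ₁ f₀ +
      ddBdry k A B dA dB δ₀ δ₀ ψ₀ = ddId k A B M₀)
    (hψ₁ : ddComp k A B f₀ φ₁ + ddComp k A B φ₂ f₁ +
      ddBdry k A B dA dB δ₁ δ₁ ψ₁ = ddId k A B M₁)
    (hψ₂ : ddComp k A B f₁ φ₂ + ddComp k A B φ₀ f₂ +
      ddBdry k A B dA dB δ₂ δ₂ ψ₂ = ddId k A B M₂) :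
    (ddBdry k A B dA dB δ₀ (coneδ k A B δ₁ δ₂ f₁) (Gmor k A B f₀ φ₀) = 0 ∧
      ddBdry k A B dA dB (coneδ k A B δ₁ δ₂ f₁) δ₀ (G'mor k A B φ₁ f₂) = 0 ∧
      ddBdry k A B dA dB δ₀ δ₀ ψ₀ =
        ddComp k A B (G'mor k A B φ₁ f₂) (Gmor k A B f₀ φ₀) + ddId k A B M₀) ∧
    (ddBdry k A B dA dB δ₁ (coneδ k A B δ₂ δ₀ f₂) (Gmor k A B f₁ φ₁) = 0 ∧
      ddBdry k A B dA dB (coneδ k A B δ₂ δ₀ f₂) δ₁ (G'mor k A B φ₂ f₀) = 0 ∧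
      ddBdry k A B dA dB δ₁ δ₁ ψ₁ =
        ddComp k A B (G'mor k A B φ₂ f₀) (Gmor k A B f₁ φ₁) + ddId k A B M₁) ∧
    (ddBdry k A B dA dB δ₂ (coneδ k A B δ₀ δ₁ f₀) (Gmor k A B f₂ φ₂) = 0 ∧
      ddBdry k A B dA dB (coneδ k A B δ₀ δ₁ f₀) δ₂ (G'mor k A B φ₀ f₁) = 0 ∧
      ddBdry k A B dA dB δ₂ δ₂ ψ₂ =
        ddComp k A B (G'mor k A B φ₀ f₁) (Gmor k A B f₂ φ₂) + ddId k A B M₂) := by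
  refine ⟨⟨?_, ?_, ?_⟩, ⟨?_, ?_, ?_⟩, ⟨?_, ?_, ?_⟩⟩
  · exact G_hom k A B dA dB δ₀ δ₁ δ₂ f₀ f₁ φ₀ hf₀ hφ₀
  · exact G'_hom k A B dA dB δ₀ δ₁ δ₂ f₁ φ₁ f₂ hφ₁ hf₂
  · exact homotopy_gen k A B dA dB δ₀ f₀ φ₀ φ₁ f₂ ψ₀ hψ₀
  · exact G_hom k A B dA dB δ₁ δ₂ δ₀ f₁ f₂ φ₁ hf₁ hφ₁
  · exact G'_hom k A B dA dB δ₁ δ₂ δ₀ f₂ φ₂ f₀ hφ₂ hf₀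
  · exact homotopy_gen k A B dA dB δ₁ f₁ φ₁ φ₂ f₀ ψ₁ hψ₁
  · exact G_hom k A B dA dB δ₂ δ₀ δ₁ f₂ f₀ φ₂ hf₂ hφ₂
  · exact G'_hom k A B dA dB δ₂ δ₀ δ₁ f₀ φ₀ f₁ hφ₀ hf₁
  · exact homotopy_gen k A B dA dB δ₂ f₂ φ₂ φ₀ f₁ ψ₂ hψ₂


end DD
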